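/- Let p be a prime, c an integer prime to p, a, b ≥ 0, and k ≥ 1. Then D'_{2k}·Σ_{j=0}^{p^b - 1} Σ_{s=0}^{p^a - 1} (s + j·p^a)^{2k-1}·⌊sc/p^a⌋ ≡ D'_{2k}·p^b·Σ_{s=0}^{p^a - 1} s^{2k-1}·⌊sc/p^a⌋ (mod p^{a+b}). -/

import Mathlib

open Finset

lemma odd_of_dvd_odd {d m : ℕ} (h : d ∣ m) (hm : Odd m) : Odd d := by
  obtain ⟨e, rfl⟩ := h
  exact (Nat.odd_mul.mp hm).1

def oddDen : Subring ℚ where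
  carrier := {q | Odd q.den}
  one_mem' := by simp
  zero_mem' := by simp
  add_mem' := fun ha hb => odd_of_dvd_odd (Rat.add_den_dvd _ _) (ha.mul hb)
  mul_mem' := fun ha hb => odd_of_dvd_odd (Rat.mul_den_dvd _ _) (ha.mul hb)
  neg_mem' := fun ha => by simpa [Rat.den_neg_eq_den] using ha

lemma mem_oddDen {q : ℚ} : q ∈ oddDen ↔ Odd q.den := Iff.rfl

lemma intCast_mem_oddDen (z : ℤ) : (z : ℚ) ∈ oddDen := by
  simp [mem_oddDen, Rat.den_intCast]

lemma natCast_mem_oddDen (n : ℕ) : (n : ℚ) ∈ oddDen := by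
  simpa using intCast_mem_oddDen n

lemma two_mem_oddDen : (2 : ℚ) ∈ oddDen := by
  simpa using natCast_mem_oddDen 2

lemma inv_natCast_mem_oddDen {n : ℕ} (h : Odd n) : ((n : ℚ))⁻¹ ∈ oddDen := by
  have hn : 0 < n := by rcases h with ⟨e, rfl⟩; omega
  simp [mem_oddDen, Rat.inv_natCast_den_of_pos hn, h]

lemma half_not_mem_oddDen : ¬ ((2 : ℚ)⁻¹ ∈ oddDen) := by
  have h : ((2:ℚ)⁻¹).den = 2 := by
    have := Rat.inv_natCast_den_of_pos (a := 2) (by norm_num)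
    simp only [Nat.cast_ofNat] at this; exact this
  simp [mem_oddDen, h]

lemma bernoulli_key : ∀ m : ℕ, (2 * bernoulli m) ∈ oddDen ∧
    (Even m → 2 ≤ m → ∃ r ∈ oddDen, 2 * bernoulli m = 1 - 2 * r) := by
  intro m
  induction m using Nat.strong_induction_on with
  | _ m ih =>
    rcases Nat.lt_or_ge m 2 with hm2 | hm2
    · interval_cases m
      · constructor
        · simpa using two_mem_oddDen
        · intro _ h; omega
      · constructor
        · have h1 : 2 * bernoulli 1 = -1 := by norm_num [bernoulli_one]
          rw [h1]; exact neg_mem (one_mem _)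
        · intro h; exact absurd h (by decide)
    · rcases Nat.even_or_odd m with hme | hmo
      case inr =>
        have hb0 : bernoulli m = 0 := by
          rw [bernoulli_eq_bernoulli'_of_ne_one (by omega)]
          exact bernoulli'_eq_zero_of_odd hmo (by omega)
        constructor
        · have h0 : 2 * bernoulli m = 0 := by simp [hb0]
          rw [h0]; exact zero_mem _
        · intro h; exact absurd h (by simpa using hmo)
      case inl =>
        have hm0 : m ≠ 0 := by omega
        have hmq : ((m : ℚ) + 1) ≠ 0 := by positivity
        have hodd : Odd (m + 1) := hme.add_one
        have hlhs : (∑ k ∈ range 2, (k : ℚ) ^ m) = 1 := by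
          rw [Finset.sum_range_succ, Finset.sum_range_one]
          simp [zero_pow hm0]
        have hfa := sum_range_pow 2 m
        push_cast at hfa
        rw [hlhs, Finset.sum_range_succ] at hfa
        have hlast : bernoulli m * ((m + 1).choose m) * (2:ℚ) ^ (m + 1 - m) / ((m:ℚ) + 1)
            = 2 * bernoulli m := by
          have he1 : m + 1 - m = 1 := by omega
          rw [Nat.choose_succ_self_right, he1]
          push_cast
          field_simp
        rw [hlast] at hfa
        set r : ℚ := ∑ i ∈ range m,
          (2 * bernoulli i) * ((m + 1).choose i) * (2:ℚ) ^ (m - 1 - i) / (m + 1) with hr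
        have hsum : (∑ i ∈ range m,
            bernoulli i * ((m + 1).choose i) * (2:ℚ) ^ (m + 1 - i) / (m + 1)) = 2 * r := by
          rw [hr, Finset.mul_sum]
          refine Finset.sum_congr rfl fun i hi => ?_
          have hi' : i < m := Finset.mem_range.mp hi
          have he : m + 1 - i = (m - 1 - i) + 2 := by omega
          rw [he, pow_add]
          field_simp
        rw [hsum] at hfa
        have hrmem : r ∈ oddDen := by
          rw [hr]
          refine Subring.sum_mem _ fun i hi => ?_
          rw [div_eq_mul_inv]
          exact mul_mem (mul_mem (mul_mem (ih i (Finset.mem_range.mp hi)).1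
            (natCast_mem_oddDen _)) (pow_mem two_mem_oddDen _))
            (by exact_mod_cast inv_natCast_mem_oddDen hodd)
        have hid : 2 * bernoulli m = 1 - 2 * r := by linarith [hfa]
        exact ⟨hid ▸ sub_mem (one_mem _) (mul_mem two_mem_oddDen hrmem), fun _ _ => ⟨r, hrmem, hid⟩⟩

lemma two_dvd_den (k : ℕ) (hk : 1 ≤ k) : 2 ∣ (bernoulli (2 * k) / (2 * k : ℚ)).den := by
  by_contra h
  have hq : (bernoulli (2 * k) / (2 * k : ℚ)) ∈ oddDen := by
    rw [mem_oddDen, Nat.odd_iff]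
    omega
  have hk0 : ((2 * k : ℚ)) ≠ 0 := by
    have : (0:ℚ) < k := by exact_mod_cast Nat.pos_of_ne_zero (by omega)
    positivity
  have hB : bernoulli (2 * k) ∈ oddDen := by
    have hB' : bernoulli (2 * k) = (bernoulli (2 * k) / (2 * k : ℚ)) * (2 * k : ℚ) := by
      field_simp
    rw [hB']
    exact mul_mem hq (mul_mem two_mem_oddDen (natCast_mem_oddDen k))
  obtain ⟨r, hr, hid⟩ := (bernoulli_key (2 * k)).2 (even_two_mul k) (by omega)
  have hhalf : (2:ℚ)⁻¹ = r + bernoulli (2 * k) := by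
    field_simp
    linarith
  exact half_not_mem_oddDen (hhalf ▸ add_mem hr hB)

lemma binom2_aux (x t : ℤ) : ∀ n : ℕ, ∃ r : ℤ,
    (x + t) ^ (n + 1) = x ^ (n + 1) + (n + 1) * x ^ n * t + t ^ 2 * r := by
  intro n
  induction n with
  | zero => exact ⟨0, by ring⟩
  | succ n ih =>
    obtain ⟨r, hr⟩ := ih
    refine ⟨r * x + (n + 1) * x ^ n + t * r, ?_⟩
    have : (x + t) ^ (n + 1 + 1) = (x + t) ^ (n + 1) * (x + t) := by ring
    rw [this, hr]
    push_cast
    ring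

lemma binom2 (x t : ℤ) (n : ℕ) (hn : 1 ≤ n) : ∃ r : ℤ,
    (x + t) ^ n = x ^ n + n * x ^ (n - 1) * t + t ^ 2 * r := by
  obtain ⟨m, rfl⟩ : ∃ m, n = m + 1 := ⟨n - 1, by omega⟩
  obtain ⟨r, hr⟩ := binom2_aux x t m
  exact ⟨r, by simpa using hr⟩

lemma sum_range_mul_split (F : ℕ → ℤ) (N m : ℕ) :
    ∑ j ∈ range (N * m), F j = ∑ t ∈ range m, ∑ q ∈ range N, F (t * N + q) := by
  induction m with
  | zero => simp
  | succ m ih =>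
    rw [Nat.mul_succ, Finset.sum_range_add, ih, Finset.sum_range_succ]
    congr 1
    refine Finset.sum_congr rfl fun q _ => ?_
    congr 1
    ring

lemma step_lemma (p : ℕ) (hp : 1 ≤ p) (D : ℤ) (hD : 2 ∣ D) (n a : ℕ) (hn : 1 ≤ n)
    (ha : 1 ≤ a) (g : ℕ → ℤ) :
    (p : ℤ) ^ (a + 1) ∣
      D * (∑ j ∈ range p, ∑ s ∈ range (p ^ a), ((s : ℤ) + (j : ℤ) * (p : ℤ) ^ a) ^ n * g s)
      - D * (p : ℤ) * (∑ s ∈ range (p ^ a), (s : ℤ) ^ n * g s) := by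
  obtain ⟨C, hC⟩ := hD
  have key : ∀ j s : ℕ, ∃ r : ℤ,
      ((s : ℤ) + (j : ℤ) * (p : ℤ) ^ a) ^ n * g s - (s : ℤ) ^ n * g s
      = (n : ℤ) * (s : ℤ) ^ (n - 1) * g s * (j : ℤ) * (p : ℤ) ^ a + (p : ℤ) ^ (2 * a) * r := by
    intro j s
    obtain ⟨r, hr⟩ := binom2 (s : ℤ) ((j : ℤ) * (p : ℤ) ^ a) n hn
    refine ⟨(j : ℤ) ^ 2 * r * g s, ?_⟩
    rw [hr]
    rw [show (2 : ℕ) * a = a + a from by ring, pow_add]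
    ring
  choose r hr using key
  set W : ℤ := ∑ s ∈ range (p ^ a), (s : ℤ) ^ (n - 1) * g s with hW
  set J : ℤ := ∑ j ∈ range p, (j : ℤ) with hJ
  have hA : ∀ j : ℕ, ∑ s ∈ range (p ^ a), ((n : ℤ) * (s : ℤ) ^ (n - 1) * g s * (j : ℤ) * (p : ℤ) ^ a)
      = (j : ℤ) * ((n : ℤ) * (p : ℤ) ^ a * W) := by
    intro j
    rw [hW, Finset.mul_sum, Finset.mul_sum]
    exact Finset.sum_congr rfl fun s _ => by ring
  have hre : D * (∑ j ∈ range p, ∑ s ∈ range (p ^ a),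
        ((s : ℤ) + (j : ℤ) * (p : ℤ) ^ a) ^ n * g s)
      - D * (p : ℤ) * (∑ s ∈ range (p ^ a), (s : ℤ) ^ n * g s)
      = D * (J * ((n : ℤ) * (p : ℤ) ^ a * W))
        + D * ((p : ℤ) ^ (2 * a) * (∑ j ∈ range p, ∑ s ∈ range (p ^ a), r j s)) := by
    have h1 : D * (p : ℤ) * (∑ s ∈ range (p ^ a), (s : ℤ) ^ n * g s)
        = ∑ j ∈ range p, D * (∑ s ∈ range (p ^ a), (s : ℤ) ^ n * g s) := by
      rw [Finset.sum_const, Finset.card_range]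
      ring
    rw [h1, Finset.mul_sum, ← Finset.sum_sub_distrib]
    have h2 : ∀ j ∈ range p,
        D * (∑ s ∈ range (p ^ a), ((s : ℤ) + (j : ℤ) * (p : ℤ) ^ a) ^ n * g s)
          - D * (∑ s ∈ range (p ^ a), (s : ℤ) ^ n * g s)
        = D * ((j : ℤ) * ((n : ℤ) * (p : ℤ) ^ a * W))
          + D * ((p : ℤ) ^ (2 * a) * (∑ s ∈ range (p ^ a), r j s)) := by
      intro j _
      rw [← mul_sub, ← Finset.sum_sub_distrib,
        Finset.sum_congr rfl fun s _ => hr j s, Finset.sum_add_distrib, hA j,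
        ← Finset.mul_sum]
      ring
    rw [Finset.sum_congr rfl h2, Finset.sum_add_distrib]
    congr 1
    · rw [hJ, Finset.sum_mul, Finset.mul_sum, Finset.mul_sum]
    · rw [Finset.mul_sum, Finset.mul_sum]
  rw [hre]
  apply dvd_add
  · have hg : J * 2 = (p : ℤ) * ((p : ℤ) - 1) := by
      have h0 := Finset.sum_range_id_mul_two p
      have h4 : ((∑ j ∈ range p, j : ℕ) : ℤ) * 2 = ((p * (p - 1) : ℕ) : ℤ) := by
        exact_mod_cast congrArg (Nat.cast : ℕ → ℤ) h0
      push_cast [Nat.cast_sub hp] at h4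
      rw [hJ]
      simpa using h4
    refine ⟨C * (n : ℤ) * ((p : ℤ) - 1) * W, ?_⟩
    linear_combination (C * (n : ℤ) * (p:ℤ)^a * W) * hg + ((n:ℤ) * (p:ℤ)^a * J * W) * hC
  · exact Dvd.dvd.mul_left ((pow_dvd_pow (p:ℤ) (by omega : a + 1 ≤ 2 * a)).mul_right _) D

lemma main_lemma (p : ℕ) (hp : 1 ≤ p) (D : ℤ) (hD : 2 ∣ D) (n : ℕ) (hn : 1 ≤ n) :
    ∀ (b a : ℕ), 1 ≤ a → ∀ g : ℕ → ℤ,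
    (p : ℤ) ^ (a + b) ∣
      D * (∑ j ∈ range (p ^ b), ∑ s ∈ range (p ^ a),
            ((s : ℤ) + (j : ℤ) * (p : ℤ) ^ a) ^ n * g s)
      - D * (p : ℤ) ^ b * (∑ s ∈ range (p ^ a), (s : ℤ) ^ n * g s) := by
  intro b
  induction b with
  | zero =>
    intro a ha g
    simp
  | succ b ih =>
    intro a ha g
    set g' : ℕ → ℤ := fun s' => g (s' % p ^ a) with hg'
    have h1 : (∑ j ∈ range (p ^ (b + 1)), ∑ s ∈ range (p ^ a),
          ((s : ℤ) + (j : ℤ) * (p : ℤ) ^ a) ^ n * g s)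
        = ∑ t ∈ range (p ^ b), ∑ s' ∈ range (p ^ (a + 1)),
            ((s' : ℤ) + (t : ℤ) * (p : ℤ) ^ (a + 1)) ^ n * g' s' := by
      rw [show p ^ (b + 1) = p * p ^ b from by ring, sum_range_mul_split]
      refine Finset.sum_congr rfl fun t _ => ?_
      rw [show p ^ (a + 1) = p ^ a * p from by ring, sum_range_mul_split]
      refine Finset.sum_congr rfl fun q hq => Finset.sum_congr rfl fun s hs => ?_
      have hmod : (q * p ^ a + s) % p ^ a = s := by
        rw [Nat.add_comm, Nat.add_mul_mod_self_right]
        exact Nat.mod_eq_of_lt (Finset.mem_range.mp hs)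
      simp only [hg', hmod]
      congr 1
      push_cast
      ring
    have h2 : (∑ s' ∈ range (p ^ (a + 1)), (s' : ℤ) ^ n * g' s')
        = ∑ j ∈ range p, ∑ s ∈ range (p ^ a),
            ((s : ℤ) + (j : ℤ) * (p : ℤ) ^ a) ^ n * g s := by
      rw [show p ^ (a + 1) = p ^ a * p from by ring, sum_range_mul_split]
      refine Finset.sum_congr rfl fun q hq => Finset.sum_congr rfl fun s hs => ?_
      have hmod : (q * p ^ a + s) % p ^ a = s := by
        rw [Nat.add_comm, Nat.add_mul_mod_self_right]
        exact Nat.mod_eq_of_lt (Finset.mem_range.mp hs)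
      simp only [hg', hmod]
      congr 1
      push_cast
      ring
    have key1 := ih (a + 1) (by omega) g'
    have key2 := step_lemma p hp D hD n a hn ha g
    have hsplit : D * (∑ j ∈ range (p ^ (b + 1)), ∑ s ∈ range (p ^ a),
          ((s : ℤ) + (j : ℤ) * (p : ℤ) ^ a) ^ n * g s)
        - D * (p : ℤ) ^ (b + 1) * (∑ s ∈ range (p ^ a), (s : ℤ) ^ n * g s)
        = (D * (∑ t ∈ range (p ^ b), ∑ s' ∈ range (p ^ (a + 1)),
              ((s' : ℤ) + (t : ℤ) * (p : ℤ) ^ (a + 1)) ^ n * g' s')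
            - D * (p : ℤ) ^ b * (∑ s' ∈ range (p ^ (a + 1)), (s' : ℤ) ^ n * g' s'))
          + (p : ℤ) ^ b * (D * (∑ j ∈ range p, ∑ s ∈ range (p ^ a),
              ((s : ℤ) + (j : ℤ) * (p : ℤ) ^ a) ^ n * g s)
            - D * (p : ℤ) * (∑ s ∈ range (p ^ a), (s : ℤ) ^ n * g s)) := by
      rw [h1, h2]
      ring
    rw [hsplit, show a + (b + 1) = (a + 1) + b from by omega]
    refine dvd_add key1 ?_
    have he : (p : ℤ) ^ ((a + 1) + b) = (p : ℤ) ^ b * (p : ℤ) ^ (a + 1) := by ring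
    rw [he]
    exact mul_dvd_mul_left _ key2

theorem vanish2 (p : ℕ) (hp : p.Prime) (c : ℤ) (hc : IsCoprime c (p : ℤ))
    (a b k : ℕ) (hk : 1 ≤ k) :
    ((p : ℤ) ^ (a + b)) ∣
      (((bernoulli (2 * k) / (2 * k : ℚ)).den : ℤ) *
        ∑ j ∈ Finset.range (p ^ b), ∑ s ∈ Finset.range (p ^ a),
          ((s : ℤ) + (j : ℤ) * (p : ℤ) ^ a) ^ (2 * k - 1) * ⌊(s : ℚ) * (c : ℚ) / (p : ℚ) ^ a⌋
       - ((bernoulli (2 * k) / (2 * k : ℚ)).den : ℤ) * (p : ℤ) ^ b *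
        ∑ s ∈ Finset.range (p ^ a),
          (s : ℤ) ^ (2 * k - 1) * ⌊(s : ℚ) * (c : ℚ) / (p : ℚ) ^ a⌋) := by
  rcases Nat.eq_zero_or_pos a with rfl | ha
  · simp
  · have hD : (2 : ℤ) ∣ ((bernoulli (2 * k) / (2 * k : ℚ)).den : ℤ) := by
      exact_mod_cast two_dvd_den k hk
    exact main_lemma p hp.pos ((bernoulli (2 * k) / (2 * k : ℚ)).den : ℤ) hD
      (2 * k - 1) (by omega) b a ha (fun s => ⌊(s : ℚ) * (c : ℚ) / (p : ℚ) ^ a⌋)
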